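/- If sequences satisfy W_n ≥ M_n where M_n ≥ ∏_{i} (y_i!·(y_i+1)!/2^{y_i}) · ∏_i y_i! with y_{i+1} ≥ n/2^{i+1} − 1 for 0 ≤ i ≤ ⌊log₂ n⌋ − 1, then log W_n ≥ 3n·log n + O(n). -/

import Mathlib

open Finset


lemma log_factorial_ge (y : ℕ) : (y:ℝ) * Real.log y - y ≤ Real.log (Nat.factorial y) := by
  induction y with
  | zero => simp
  | succ k ih =>
    have hfac : Real.log (Nat.factorial (k+1)) = Real.log (k+1) + Real.log (Nat.factorial k) := by
      rw [Nat.factorial_succ, Nat.cast_mul, Real.log_mul (by positivity) (by positivity)]; push_cast; ring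
    have hkey : (k:ℝ) * Real.log (k+1) ≤ (k:ℝ) * Real.log k + 1 := by
      rcases Nat.eq_zero_or_pos k with hk | hk
      · simp [hk]
      · have hk0 : (0:ℝ) < k := by exact_mod_cast hk
        have h1 : Real.log ((k+1 : ℝ) / k) ≤ (k+1)/k - 1 :=
          Real.log_le_sub_one_of_pos (by positivity)
        rw [Real.log_div (by positivity) (by positivity)] at h1
        have h2 : ((k:ℝ)+1)/k - 1 = 1/k := by field_simp; ring
        rw [h2] at h1
        have := mul_le_mul_of_nonneg_left h1 (le_of_lt hk0)
        have h3 : (k:ℝ) * (1/k) = 1 := by field_simp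
        nlinarith
    rw [hfac]
    push_cast
    nlinarith

lemma sum_geom (L : ℕ) : ∑ i ∈ Icc 1 L, ((1:ℝ)/2)^i = 1 - (1/2)^L := by
  induction L with
  | zero => simp
  | succ k ih =>
    rw [show Icc 1 (k+1) = insert (k+1) (Icc 1 k) from (Finset.insert_Icc_right_eq_Icc_add_one (by omega)).symm,
      Finset.sum_insert (by simp)]
    rw [ih]; ring

lemma sum_igeom (L : ℕ) : ∑ i ∈ Icc 1 L, (i:ℝ) * ((1:ℝ)/2)^i = 2 - ((L:ℝ)+2) * (1/2)^L := by
  induction L with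
  | zero => simp
  | succ k ih =>
    rw [show Icc 1 (k+1) = insert (k+1) (Icc 1 k) from (Finset.insert_Icc_right_eq_Icc_add_one (by omega)).symm,
      Finset.sum_insert (by simp)]
    rw [ih]; push_cast; ring

set_option maxHeartbeats 1000000 in
lemma perterm (y : ℕ) (t : ℝ) (ht : 1 ≤ t) (hyt : t - 1 ≤ (y:ℝ)) :
    3 * t * Real.log t - 50*t - 50 ≤
      Real.log ((Nat.factorial y : ℝ) * (Nat.factorial (y+1) : ℝ) / 2 ^ y) +
        Real.log (Nat.factorial y : ℝ) := by
  have hl2a : (0.6931471803 : ℝ) < Real.log 2 := Real.log_two_gt_d9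
  have hl2b : Real.log 2 < 0.6931471808 := Real.log_two_lt_d9
  have hfp : (0:ℝ) < Nat.factorial y := by exact_mod_cast Nat.factorial_pos y
  have hfp1 : (0:ℝ) < Nat.factorial (y+1) := by exact_mod_cast Nat.factorial_pos (y+1)
  -- expand the log
  have hexp : Real.log ((Nat.factorial y : ℝ) * (Nat.factorial (y+1) : ℝ) / 2 ^ y) +
        Real.log (Nat.factorial y : ℝ)
      = 2 * Real.log (Nat.factorial y : ℝ) + Real.log (Nat.factorial (y+1) : ℝ)
        - y * Real.log 2 := by
    rw [Real.log_div (by positivity) (by positivity),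
      Real.log_mul (by positivity) (by positivity), Real.log_pow]
    push_cast; ring
  have hmono : Real.log (Nat.factorial y : ℝ) ≤ Real.log (Nat.factorial (y+1) : ℝ) :=
    Real.log_le_log hfp (by exact_mod_cast Nat.factorial_le (Nat.le_succ y))
  have hlf := log_factorial_ge y
  -- so LHS of goal ≤ g(y) := 3*(y log y - y) - y*log 2 suffices
  have hg : 3 * ((y:ℝ) * Real.log y - y) - y * Real.log 2 ≤
      Real.log ((Nat.factorial y : ℝ) * (Nat.factorial (y+1) : ℝ) / 2 ^ y) +
        Real.log (Nat.factorial y : ℝ) := by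
    rw [hexp]; nlinarith
  refine le_trans ?_ hg
  have hylogy : (y:ℝ) - 1 ≤ (y:ℝ) * Real.log y := by
    rcases Nat.eq_zero_or_pos y with h0 | h0
    · simp [h0]
    · have hy0 : (0:ℝ) < y := by exact_mod_cast h0
      have := Real.log_le_sub_one_of_pos (x := 1/(y:ℝ)) (by positivity)
      rw [Real.log_div one_ne_zero (by positivity), Real.log_one] at this
      have h2 : Real.log y ≥ 1 - 1/(y:ℝ) := by nlinarith
      have h3 : (y:ℝ) * (1/(y:ℝ)) = 1 := by field_simp
      nlinarith
  by_cases ht5 : t ≤ 5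
  · -- RHS small: 3 t log t ≤ 3 t (t-1) ≤ 60; LHS piece g(y) ≥ -7
    have hlt : Real.log t ≤ t - 1 := Real.log_le_sub_one_of_pos (by linarith)
    have hy0 : (0:ℝ) ≤ (y:ℝ) := Nat.cast_nonneg y
    have hgge : -7 ≤ 3 * ((y:ℝ) * Real.log y - y) - y * Real.log 2 := by
      by_cases hy4 : (y:ℝ) ≤ 4
      · have h1 : (y:ℝ) * Real.log 2 ≤ (y:ℝ) * 0.7 := by nlinarith
        nlinarith
      · have hy5 : (4:ℝ) ≤ (y:ℝ) := by linarith
        have h5 : Real.log 4 ≤ Real.log y := Real.log_le_log (by norm_num) (by linarith)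
        have h4 : Real.log (4:ℝ) = 2 * Real.log 2 := by
          rw [show (4:ℝ) = 2^2 by norm_num, Real.log_pow]; push_cast; ring
        have h6 : (y:ℝ) * (3 + Real.log 2) ≤ (y:ℝ) * (3 * Real.log y) :=
          mul_le_mul_of_nonneg_left (by nlinarith) hy0
        nlinarith
    nlinarith [mul_le_mul_of_nonneg_left hlt (by linarith : (0:ℝ) ≤ 3*t)]
  · -- t ≥ 5, so y ≥ t-1 ≥ 4; use monotonicity of g
    push_neg at ht5
    have ht1 : (4:ℝ) ≤ t - 1 := by linarith
    have hy4 : (4:ℝ) ≤ (y:ℝ) := by linarith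
    have hlog4 : Real.log (4:ℝ) = 2 * Real.log 2 := by
      rw [show (4:ℝ) = 2^2 by norm_num, Real.log_pow]; push_cast; ring
    have hlogt1 : Real.log 4 ≤ Real.log (t-1) := Real.log_le_log (by norm_num) ht1
    -- monotonicity: g(y) ≥ g(t-1)
    have hmy : Real.log (t-1) ≤ Real.log y := Real.log_le_log (by linarith) hyt
    have hy0' : (0:ℝ) ≤ (y:ℝ) := Nat.cast_nonneg y
    have hk1 : (y:ℝ) * Real.log (t-1) ≤ (y:ℝ) * Real.log y :=
      mul_le_mul_of_nonneg_left hmy hy0'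
    have hc : 3 + Real.log 2 ≤ 3 * Real.log (t-1) := by linarith
    have hnn : (0:ℝ) ≤ (y:ℝ) - (t-1) := by linarith
    have hk2 : ((y:ℝ) - (t-1)) * (3 + Real.log 2) ≤ ((y:ℝ) - (t-1)) * (3 * Real.log (t-1)) :=
      mul_le_mul_of_nonneg_left hc hnn
    have hgy : 3 * ((t-1) * Real.log (t-1)) - (3 + Real.log 2) * (t-1) ≤
        3 * ((y:ℝ) * Real.log y - y) - y * Real.log 2 := by
      nlinarith [hk1, hk2]
    -- L2: (t-1) log(t-1) ≥ (t-1) log t - 1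
    have hL2 : (t-1) * Real.log t - 1 ≤ (t-1) * Real.log (t-1) := by
      have hx : (0:ℝ) < t - 1 := by linarith
      have h1 : Real.log (t / (t-1)) ≤ t/(t-1) - 1 := Real.log_le_sub_one_of_pos (by positivity)
      rw [Real.log_div (by linarith) (by linarith)] at h1
      have h2 : t/(t-1) - 1 = 1/(t-1) := by field_simp; ring
      rw [h2] at h1
      have := mul_le_mul_of_nonneg_left h1 (le_of_lt hx)
      have h3 : (t-1) * (1/(t-1)) = 1 := by field_simp
      nlinarith
    have hlt : Real.log t ≤ t - 1 := Real.log_le_sub_one_of_pos (by linarith)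
    have hltpos : 0 ≤ Real.log t := Real.log_nonneg ht
    have hl2t : Real.log 2 * (t-1) ≤ 1 * (t-1) := by nlinarith
    nlinarith


theorem stmt18 (W M : ℕ → ℝ) (y : ℕ → ℕ → ℕ)
    (hWM : ∀ n, W n ≥ M n)
    (hM : ∀ n : ℕ, M n ≥
      (∏ i ∈ Finset.Icc 1 (Nat.log 2 n),
        ((Nat.factorial (y n i) : ℝ) * (Nat.factorial (y n i + 1) : ℝ) / 2 ^ (y n i)))
      * ∏ i ∈ Finset.Icc 1 (Nat.log 2 n), (Nat.factorial (y n i) : ℝ))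
    (hy : ∀ n : ℕ, ∀ i : ℕ, i ≤ Nat.log 2 n - 1 →
      (y n (i + 1) : ℝ) ≥ (n : ℝ) / 2 ^ (i + 1) - 1) :
    ∃ C : ℝ, ∀ n : ℕ, 2 ≤ n →
      Real.log (W n) ≥ 3 * (n : ℝ) * Real.log n - C * n := by
  refine ⟨120, fun n hn => ?_⟩
  set L := Nat.log 2 n with hLdef
  have hnn : (0:ℕ) < n := by omega
  have hn0 : (0:ℝ) < n := by exact_mod_cast hnn
  have hn2 : (2:ℝ) ≤ n := by exact_mod_cast hn
  -- positivity of the factors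
  have ha : ∀ i ∈ Finset.Icc 1 L,
      (0:ℝ) < (Nat.factorial (y n i) : ℝ) * (Nat.factorial (y n i + 1) : ℝ) / 2 ^ (y n i) := by
    intro i _
    have h1 : (0:ℝ) < (Nat.factorial (y n i):ℝ) := by exact_mod_cast Nat.factorial_pos _
    have h2 : (0:ℝ) < (Nat.factorial (y n i + 1):ℝ) := by exact_mod_cast Nat.factorial_pos _
    positivity
  have hb : ∀ i ∈ Finset.Icc 1 L, (0:ℝ) < (Nat.factorial (y n i) : ℝ) := by
    intro i _; exact_mod_cast Nat.factorial_pos _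
  have hPa : 0 < ∏ i ∈ Finset.Icc 1 L,
      ((Nat.factorial (y n i) : ℝ) * (Nat.factorial (y n i + 1) : ℝ) / 2 ^ (y n i)) :=
    Finset.prod_pos ha
  have hPb : 0 < ∏ i ∈ Finset.Icc 1 L, (Nat.factorial (y n i) : ℝ) := Finset.prod_pos hb
  have hP : 0 < (∏ i ∈ Finset.Icc 1 L,
      ((Nat.factorial (y n i) : ℝ) * (Nat.factorial (y n i + 1) : ℝ) / 2 ^ (y n i)))
      * ∏ i ∈ Finset.Icc 1 L, (Nat.factorial (y n i) : ℝ) := mul_pos hPa hPb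
  have hlogW : Real.log ((∏ i ∈ Finset.Icc 1 L,
      ((Nat.factorial (y n i) : ℝ) * (Nat.factorial (y n i + 1) : ℝ) / 2 ^ (y n i)))
      * ∏ i ∈ Finset.Icc 1 L, (Nat.factorial (y n i) : ℝ)) ≤ Real.log (W n) :=
    Real.log_le_log hP (le_trans (hM n) (hWM n))
  have hlogP : Real.log ((∏ i ∈ Finset.Icc 1 L,
      ((Nat.factorial (y n i) : ℝ) * (Nat.factorial (y n i + 1) : ℝ) / 2 ^ (y n i)))
      * ∏ i ∈ Finset.Icc 1 L, (Nat.factorial (y n i) : ℝ))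
      = ∑ i ∈ Finset.Icc 1 L,
        (Real.log ((Nat.factorial (y n i) : ℝ) * (Nat.factorial (y n i + 1) : ℝ) / 2 ^ (y n i))
          + Real.log (Nat.factorial (y n i) : ℝ)) := by
    rw [Real.log_mul (ne_of_gt hPa) (ne_of_gt hPb),
        Real.log_prod (fun i hi => ne_of_gt (ha i hi)),
        Real.log_prod (fun i hi => ne_of_gt (hb i hi)),
        ← Finset.sum_add_distrib]
  -- per-term lower bound
  have hterm : ∀ i ∈ Finset.Icc 1 L,
      3 * ((n:ℝ)/2^i) * Real.log ((n:ℝ)/2^i) - 50 * ((n:ℝ)/2^i) - 50 ≤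
        Real.log ((Nat.factorial (y n i) : ℝ) * (Nat.factorial (y n i + 1) : ℝ) / 2 ^ (y n i))
          + Real.log (Nat.factorial (y n i) : ℝ) := by
    intro i hi
    rw [Finset.mem_Icc] at hi
    have h2i : (2:ℝ)^i ≤ n := by
      have h1 : (2:ℕ)^i ≤ 2^L := Nat.pow_le_pow_right (by norm_num) hi.2
      have h2 : (2:ℕ)^L ≤ n := Nat.pow_log_le_self 2 (by omega)
      exact_mod_cast le_trans h1 h2
    have ht : (1:ℝ) ≤ (n:ℝ)/2^i := by
      rw [le_div_iff₀ (by positivity)]; linarith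
    have hyt : (n:ℝ)/2^i - 1 ≤ (y n i : ℝ) := by
      have h3 := hy n (i-1) (by omega)
      rw [show i - 1 + 1 = i by omega] at h3
      exact h3
    exact perterm (y n i) ((n:ℝ)/2^i) ht hyt
  have hsum : ∑ i ∈ Finset.Icc 1 L,
      (3 * ((n:ℝ)/2^i) * Real.log ((n:ℝ)/2^i) - 50 * ((n:ℝ)/2^i) - 50) ≤
      ∑ i ∈ Finset.Icc 1 L,
        (Real.log ((Nat.factorial (y n i) : ℝ) * (Nat.factorial (y n i + 1) : ℝ) / 2 ^ (y n i))
          + Real.log (Nat.factorial (y n i) : ℝ)) := Finset.sum_le_sum hterm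
  -- rewrite the lower sum in closed form
  have hrw : ∀ i ∈ Finset.Icc 1 L,
      3 * ((n:ℝ)/2^i) * Real.log ((n:ℝ)/2^i) - 50 * ((n:ℝ)/2^i) - 50
      = (3*(n:ℝ)*Real.log n - 50*(n:ℝ)) * ((1:ℝ)/2)^i
        - (3*(n:ℝ)*Real.log 2) * ((i:ℝ)*((1:ℝ)/2)^i) - 50 := by
    intro i _
    have hpow : ((1:ℝ)/2)^i = 1/2^i := by rw [div_pow, one_pow]
    have hdiv : (n:ℝ)/2^i = (n:ℝ) * ((1:ℝ)/2)^i := by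
      rw [hpow]; ring
    rw [Real.log_div (ne_of_gt hn0) (by positivity), Real.log_pow, hdiv]
    ring
  have hclosed : ∑ i ∈ Finset.Icc 1 L,
      (3 * ((n:ℝ)/2^i) * Real.log ((n:ℝ)/2^i) - 50 * ((n:ℝ)/2^i) - 50)
      = (3*(n:ℝ)*Real.log n - 50*(n:ℝ)) * (1 - (1/2:ℝ)^L)
        - (3*(n:ℝ)*Real.log 2) * (2 - ((L:ℝ)+2) * (1/2:ℝ)^L) - 50 * (L:ℝ) := by
    rw [Finset.sum_congr rfl hrw]
    rw [Finset.sum_sub_distrib, Finset.sum_sub_distrib, ← Finset.mul_sum, ← Finset.mul_sum,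
      sum_geom, sum_igeom, Finset.sum_const, Nat.card_Icc]
    simp
    ring
  -- final numeric estimate
  have hq0 : (0:ℝ) ≤ (1/2:ℝ)^L := by positivity
  have hq : (n:ℝ) * (1/2:ℝ)^L ≤ 2 := by
    have h1 : n < 2^(L+1) := Nat.lt_pow_succ_log_self (by norm_num) n
    have h2 : (n:ℝ) < 2^(L+1) := by exact_mod_cast h1
    have h3 : (0:ℝ) < 2^L := by positivity
    have hpow : ((1:ℝ)/2)^L = 1/2^L := by rw [div_pow, one_pow]
    rw [hpow]
    rw [mul_one_div, div_le_iff₀ h3]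
    rw [pow_succ] at h2
    linarith
  have hlogn0 : 0 ≤ Real.log n := Real.log_nonneg (by linarith)
  have hlognn : Real.log n ≤ (n:ℝ) := by
    have := Real.log_le_sub_one_of_pos hn0
    linarith
  have hLn : (L:ℝ) ≤ (n:ℝ) := by exact_mod_cast Nat.log_le_self 2 n
  have hl2a : (0.6931471803 : ℝ) < Real.log 2 := Real.log_two_gt_d9
  have hl2b : Real.log 2 < 0.6931471808 := Real.log_two_lt_d9
  have h1 : (3*Real.log n) * ((n:ℝ)*(1/2:ℝ)^L) ≤ (3*Real.log n)*2 :=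
    mul_le_mul_of_nonneg_left hq (by linarith)
  have h2 : 0 ≤ (3*(n:ℝ)*Real.log 2) * (((L:ℝ)+2)*(1/2:ℝ)^L) := by positivity
  have h3 : (n:ℝ)*Real.log 2 ≤ (n:ℝ)*0.7 :=
    mul_le_mul_of_nonneg_left (by linarith) (by linarith)
  have h4 : 0 ≤ 50*(n:ℝ)*(1/2:ℝ)^L := by positivity
  have hfin : 3 * (n:ℝ) * Real.log n - 120 * n ≤
      (3*(n:ℝ)*Real.log n - 50*(n:ℝ)) * (1 - (1/2:ℝ)^L)
        - (3*(n:ℝ)*Real.log 2) * (2 - ((L:ℝ)+2) * (1/2:ℝ)^L) - 50 * (L:ℝ) := by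
    nlinarith [h1, h2, h3, h4, hlognn, hlogn0, hLn, hn2]
  calc 3 * (n:ℝ) * Real.log n - 120 * n
      ≤ _ := hfin
    _ = _ := hclosed.symm
    _ ≤ _ := hsum
    _ = _ := hlogP.symm
    _ ≤ Real.log (W n) := hlogW
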